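/- Let G be a (m,n)-cylindrical grid (the Cartesian product of a cycle C_m of length m with a path P_n on n vertices), and let Π be a pattern of size k (a collection of k pairwise disjoint subsets of V(G), each of size 1 or 2) with all vertices of Π contained in one boundary cycle of G. If Π is cross-free (there do not exist distinct vertices a,b,c,d of Π with {a,b},{c,d} ∈ Π appearing in the cyclic order a,c,b,d or a,d,b,c along the boundary cycle) and n ≥ k, then Π is realizable in G, i.e., there exist pairwise vertex-disjoint paths in G, one joining the two vertices of each two-element member of Π (singleton members requiring only that the vertex be covered trivially). -/

import Mathlib

open SimpleGraph
open Fin.CommRing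
open scoped Fin.NatCast

/-- `x` lies in the open cyclic arc from `a` to `b` (in the natural cyclic order
of `Fin m`). -/
def cyclicBtw {m : ℕ} (a x b : Fin m) : Prop :=
  if a < b then a < x ∧ x < b else a < x ∨ x < b

section prelim
variable {m : ℕ}

lemma finSubVal (a b : Fin m) :
    (a - b).val = if b.val ≤ a.val then a.val - b.val else a.val + m - b.val := by
  have ha := a.isLt; have hb := b.isLt
  rw [Fin.sub_def]
  show (m - b.val + a.val) % m = _
  rcases le_or_gt b.val a.val with h | h
  · have e : m - b.val + a.val = m + (a.val - b.val) := by omega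
    rw [e, Nat.add_mod_left, Nat.mod_eq_of_lt (by omega), if_pos h]
  · rw [Nat.mod_eq_of_lt (by omega), if_neg (by omega)]
    omega

lemma cyclicBtw_iff (a x b : Fin m) (hab : a ≠ b) :
    cyclicBtw a x b ↔ x ≠ a ∧ (x - a).val < (b - a).val := by
  have hab' : a.val ≠ b.val := fun h => hab (Fin.ext h)
  have ha := a.isLt; have hb := b.isLt; have hx := x.isLt
  unfold cyclicBtw
  rw [finSubVal, finSubVal]
  simp only [Fin.lt_def, ne_eq, Fin.ext_iff]
  split_ifs <;> omega

lemma cyclicBtw_pos [NeZero m] (v0 a x b : Fin m) (hab : a ≠ b) (hxa : x ≠ a) (hxb : x ≠ b) :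
    cyclicBtw a x b ↔
      ((a - v0).val < (b - v0).val ↔
        (min (a - v0).val (b - v0).val < (x - v0).val ∧
         (x - v0).val < max (a - v0).val (b - v0).val)) := by
  rw [cyclicBtw_iff a x b hab]
  have h1 : x - a = (x - v0) - (a - v0) := by ring
  have h2 : b - a = (b - v0) - (a - v0) := by ring
  rw [h1, h2]
  have hA := (a - v0).isLt; have hB := (b - v0).isLt; have hX := (x - v0).isLt
  have nAB : (a - v0).val ≠ (b - v0).val := fun h => hab (sub_left_inj.mp (Fin.ext h))
  have nXA : (x - v0).val ≠ (a - v0).val := fun h => hxa (sub_left_inj.mp (Fin.ext h))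
  have nXB : (x - v0).val ≠ (b - v0).val := fun h => hxb (sub_left_inj.mp (Fin.ext h))
  have hxa' : (x ≠ a) := hxa
  have e1 := finSubVal (x - v0) (a - v0)
  have e2 := finSubVal (b - v0) (a - v0)
  simp only [ne_eq, hxa', not_false_iff, true_and]
  rcases le_or_gt (a - v0).val (b - v0).val with hm | hm
  · rw [min_eq_left hm, max_eq_right hm, e1, e2]
    split_ifs <;> omega
  · rw [min_eq_right hm.le, max_eq_left hm.le, e1, e2]
    split_ifs <;> omega

end prelim

section walks

/-- Build a walk from a vertex function with adjacent consecutive values. -/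
def walkOfFn {V : Type*} (G : SimpleGraph V) (f : ℕ → V) :
    (L : ℕ) → (∀ j, j < L → G.Adj (f j) (f (j + 1))) → G.Walk (f 0) (f L)
  | 0, _ => Walk.nil
  | (L + 1), h => (walkOfFn G f L fun j hj => h j (by omega)).concat (h L (by omega))

lemma walkOfFn_support {V : Type*} (G : SimpleGraph V) (f : ℕ → V) (L : ℕ)
    (h : ∀ j, j < L → G.Adj (f j) (f (j + 1))) :
    (walkOfFn G f L h).support = (List.range (L + 1)).map f := by
  induction L with
  | zero => simp [walkOfFn, List.range_succ]
  | succ L ih => simp [walkOfFn, Walk.support_concat, ih, List.range_succ]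

lemma cycle_adj_succ {m : ℕ} (hm : 3 ≤ m) (x : Fin m) :
    haveI : NeZero m := ⟨by omega⟩
    (cycleGraph m).Adj x (x + 1) := by
  haveI : NeZero m := ⟨by omega⟩
  rw [cycleGraph_adj']
  right
  have h : x + 1 - x = 1 := by ring
  rw [h, Fin.val_one', Nat.mod_eq_of_lt (by omega)]

/-- Column index along the three-legged path. -/
def colIdx (hs D j : ℕ) : ℕ := min j (hs + D) - min j hs

/-- Row index along the three-legged path. -/
def rowIdx (hs D j : ℕ) : ℕ := min (min j (2 * hs + D - j)) hs

end walks

lemma buildPath (m n : ℕ) (hm : 3 ≤ m) (hn0 : 0 < n) (v0 σ τ : Fin m) (hs : ℕ) (hhs : hs < n)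
    (hAB : (σ - v0).val < (τ - v0).val) :
    ∃ w : ((cycleGraph m).boxProd (pathGraph n)).Walk (σ, ⟨0, hn0⟩) (τ, ⟨0, hn0⟩),
      w.IsPath ∧ ∀ x y, (x, y) ∈ w.support →
        ((x = σ ∨ x = τ) ∧ y.val ≤ hs) ∨
        (y.val = hs ∧ (σ - v0).val ≤ (x - v0).val ∧ (x - v0).val ≤ (τ - v0).val) := by
  haveI : NeZero m := ⟨by omega⟩
  have hA := (σ - v0).isLt
  have hBm := (τ - v0).isLt
  set A := (σ - v0).val with hA'
  set B := (τ - v0).val with hB'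
  set D := B - A with hD
  have hD1 : 1 ≤ D := by omega
  set Lt := 2 * hs + D with hLt
  have hrow : ∀ j, rowIdx hs D j < n := by
    intro j
    have : rowIdx hs D j ≤ hs := min_le_right _ _
    omega
  set f : ℕ → Fin m × Fin n :=
    fun j => (σ + ((colIdx hs D j : ℕ) : Fin m), ⟨rowIdx hs D j, hrow j⟩) with hf
  have hcle : ∀ jj : ℕ, colIdx hs D jj ≤ D := fun jj => by simp only [colIdx]; omega
  have hcast : ∀ d, d ≤ D → ((d : ℕ) : Fin m).val = d :=
    fun d hd => Fin.val_cast_of_lt (by omega)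
  have hcolv : ∀ d, d ≤ D → ((σ + ((d : ℕ) : Fin m)) - v0).val = A + d := by
    intro d hd
    have e : (σ + ((d : ℕ) : Fin m)) - v0 = (σ - v0) + ((d : ℕ) : Fin m) := by ring
    rw [e, Fin.val_add, hcast d hd, ← hA', Nat.mod_eq_of_lt (by omega)]
  have hτeq : σ + ((D : ℕ) : Fin m) = τ := by
    have h1 : (τ - σ).val = D := by
      have e : τ - σ = (τ - v0) - (σ - v0) := by ring
      rw [e, finSubVal, if_pos (le_of_lt hAB)]
    calc σ + ((D : ℕ) : Fin m) = σ + (((τ - σ).val : ℕ) : Fin m) := by rw [h1]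
      _ = σ + (τ - σ) := by rw [Fin.cast_val_eq_self]
      _ = τ := by ring
  have hadj : ∀ j, j < Lt → ((cycleGraph m).boxProd (pathGraph n)).Adj (f j) (f (j + 1)) := by
    intro j hj
    rcases lt_or_ge j hs with h1 | h1
    · have e1 : colIdx hs D j = colIdx hs D (j + 1) := by simp only [colIdx]; omega
      have e2 : rowIdx hs D j = j := by simp only [rowIdx]; omega
      have e3 : rowIdx hs D (j + 1) = j + 1 := by simp only [rowIdx]; omega
      apply SimpleGraph.boxProd_adj.mpr
      right
      refine ⟨?_, by simp only [hf]; rw [e1]⟩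
      simp only [hf]
      rw [pathGraph_adj]
      left
      simp [e2, e3]
    · rcases lt_or_ge j (hs + D) with h2 | h2
      · have e1 : rowIdx hs D j = hs := by simp only [rowIdx]; omega
        have e2 : rowIdx hs D (j + 1) = hs := by simp only [rowIdx]; omega
        have e3 : colIdx hs D (j + 1) = colIdx hs D j + 1 := by simp only [colIdx]; omega
        apply SimpleGraph.boxProd_adj.mpr
        left
        constructor
        · simp only [hf]
          rw [e3]
          have e4 : ((colIdx hs D j + 1 : ℕ) : Fin m) = ((colIdx hs D j : ℕ) : Fin m) + 1 := by
            push_cast; ring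
          rw [e4, ← add_assoc]
          exact cycle_adj_succ hm _
        · simp only [hf]
          exact Fin.ext (by simp [e1, e2])
      · have e1 : colIdx hs D j = colIdx hs D (j + 1) := by simp only [colIdx]; omega
        have e2 : rowIdx hs D j = Lt - j := by simp only [rowIdx]; omega
        have e3 : rowIdx hs D (j + 1) = Lt - j - 1 := by simp only [rowIdx]; omega
        apply SimpleGraph.boxProd_adj.mpr
        right
        refine ⟨?_, by simp only [hf]; rw [e1]⟩
        simp only [hf]
        rw [pathGraph_adj]
        right
        simp only [e2, e3]
        omega
  have hcol0 : colIdx hs D 0 = 0 := by simp [colIdx]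
  have hrow0 : rowIdx hs D 0 = 0 := by simp [rowIdx]
  have h0 : f 0 = (σ, ⟨0, hn0⟩) := by
    simp only [hf, hcol0, hrow0, Nat.cast_zero, add_zero]
  have hcolL : colIdx hs D Lt = D := by simp only [colIdx]; omega
  have hrowL : rowIdx hs D Lt = 0 := by simp only [rowIdx]; omega
  have hL : f Lt = (τ, ⟨0, hn0⟩) := by
    simp only [hf, hcolL, hrowL, hτeq]
  refine ⟨((walkOfFn _ f Lt hadj).copy h0 hL), ?_, ?_⟩
  · rw [Walk.isPath_copy]
    apply Walk.IsPath.mk'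
    rw [walkOfFn_support]
    apply List.Nodup.map_on _ List.nodup_range
    intro j hj j' hj' hEq
    rw [List.mem_range] at hj hj'
    simp only [hf, Prod.mk.injEq] at hEq
    obtain ⟨hc, hr⟩ := hEq
    have h1' : colIdx hs D j = colIdx hs D j' := by
      have := congrArg Fin.val (add_left_cancel hc)
      rwa [hcast _ (hcle j), hcast _ (hcle j')] at this
    have h2' : rowIdx hs D j = rowIdx hs D j' := by
      simpa [Fin.mk.injEq] using hr
    simp only [colIdx, rowIdx] at h1' h2'
    omega
  · intro x y hxy
    rw [Walk.support_copy, walkOfFn_support] at hxy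
    obtain ⟨j, hjmem, hjeq⟩ := List.mem_map.mp hxy
    have hj : j ≤ Lt := by have := List.mem_range.mp hjmem; omega
    simp only [hf, Prod.mk.injEq] at hjeq
    obtain ⟨hcx, hry⟩ := hjeq
    have hyv : y.val = rowIdx hs D j := by rw [← hry]
    rcases lt_or_ge j hs with h1 | h1
    · left
      have e1 : colIdx hs D j = 0 := by simp only [colIdx]; omega
      rw [e1] at hcx
      simp only [Nat.cast_zero, add_zero] at hcx
      exact ⟨Or.inl hcx.symm, by rw [hyv]; exact min_le_right _ _⟩
    · rcases le_or_gt j (hs + D) with h2 | h2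
      · right
        have e1 : rowIdx hs D j = hs := by simp only [rowIdx]; omega
        have e2 : colIdx hs D j = j - hs := by simp only [colIdx]; omega
        have e3 : ((x - v0)).val = A + (j - hs) := by
          rw [← hcx, hcolv _ (hcle j), e2]
        refine ⟨by rw [hyv, e1], ?_, ?_⟩ <;> rw [e3] <;> omega
      · left
        have e1 : colIdx hs D j = D := by simp only [colIdx]; omega
        rw [e1, hτeq] at hcx
        exact ⟨Or.inr hcx.symm, by rw [hyv]; exact min_le_right _ _⟩

/-- The number of chords strictly nested inside chord `i` (in rotated coordinates). -/
def cntFun {k m : ℕ} (v0 : Fin m) (s t : Fin k → Fin m) (i : Fin k) : ℕ :=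
  (Finset.univ.filter fun j =>
    min (s i - v0).val (t i - v0).val < min (s j - v0).val (t j - v0).val ∧
    max (s j - v0).val (t j - v0).val < max (s i - v0).val (t i - v0).val).card

lemma cntFun_lt {k m : ℕ} (v0 : Fin m) (s t : Fin k → Fin m) (i : Fin k) :
    cntFun v0 s t i < k := by
  have hsub : (Finset.univ.filter fun j =>
      min (s i - v0).val (t i - v0).val < min (s j - v0).val (t j - v0).val ∧
      max (s j - v0).val (t j - v0).val < max (s i - v0).val (t i - v0).val) ⊂
      Finset.univ := by
    rw [Finset.ssubset_iff_of_subset (Finset.subset_univ _)]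
    exact ⟨i, Finset.mem_univ i, by simp [Finset.mem_filter]⟩
  have := Finset.card_lt_card hsub
  simpa [cntFun, Finset.card_univ] using this

lemma cntFun_mono {k m : ℕ} (v0 : Fin m) (s t : Fin k → Fin m) (i j : Fin k)
    (h1 : min (s i - v0).val (t i - v0).val < min (s j - v0).val (t j - v0).val)
    (h2 : max (s j - v0).val (t j - v0).val < max (s i - v0).val (t i - v0).val) :
    cntFun v0 s t j < cntFun v0 s t i := by
  apply Finset.card_lt_card
  have hsub : (Finset.univ.filter fun a =>
      min (s j - v0).val (t j - v0).val < min (s a - v0).val (t a - v0).val ∧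
      max (s a - v0).val (t a - v0).val < max (s j - v0).val (t j - v0).val) ⊆
      (Finset.univ.filter fun a =>
      min (s i - v0).val (t i - v0).val < min (s a - v0).val (t a - v0).val ∧
      max (s a - v0).val (t a - v0).val < max (s i - v0).val (t i - v0).val) := by
    intro a ha
    simp only [Finset.mem_filter, Finset.mem_univ, true_and] at ha ⊢
    omega
  rw [Finset.ssubset_iff_of_subset hsub]
  refine ⟨j, ?_, ?_⟩
  · simp only [Finset.mem_filter, Finset.mem_univ, true_and]
    omega
  · simp only [Finset.mem_filter, Finset.mem_univ, true_and]
    omega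

/-- Two chords `{a,b}` and `{c,d}` of a cycle *cross* iff exactly one of `c`, `d`
lies in the open arc from `a` to `b`. -/
def chordsCross {m : ℕ} (a b c d : Fin m) : Prop :=
  Xor' (cyclicBtw a c b) (cyclicBtw a d b)

set_option maxHeartbeats 1600000 in
theorem cylindrical_grid_linkage (m n k : ℕ) (hm : 3 ≤ m) (hn0 : 0 < n) (hnk : k ≤ n)
    (s t : Fin k → Fin m)
    (hdisj : ∀ i j : Fin k, i ≠ j → ({s i, t i} : Set (Fin m)) ∩ {s j, t j} = ∅)
    (hcf : ∀ i j : Fin k, i ≠ j → ¬ chordsCross (s i) (t i) (s j) (t j)) :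
    ∃ w : ∀ i : Fin k,
        ((cycleGraph m).boxProd (pathGraph n)).Walk
          (s i, ⟨0, hn0⟩) (t i, ⟨0, hn0⟩),
      (∀ i, (w i).IsPath) ∧
      ∀ i j : Fin k, i ≠ j → (w i).support.Disjoint (w j).support := by
  rcases Nat.eq_zero_or_pos k with hk | hk
  · subst hk
    exact ⟨fun i => i.elim0, fun i => i.elim0, fun i => i.elim0⟩
  haveI : NeZero m := ⟨by omega⟩
  set v0 : Fin m := s ⟨0, hk⟩ with hv0
  have hne : ∀ i j : Fin k, i ≠ j → s i ≠ s j ∧ s i ≠ t j ∧ t i ≠ s j ∧ t i ≠ t j := by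
    intro i j hij
    have hd := hdisj i j hij
    refine ⟨fun h => Set.eq_empty_iff_forall_notMem.mp hd (s i) ⟨by simp, by simp [h]⟩,
            fun h => Set.eq_empty_iff_forall_notMem.mp hd (s i) ⟨by simp, by simp [h]⟩,
            fun h => Set.eq_empty_iff_forall_notMem.mp hd (t i) ⟨by simp, by simp [h]⟩,
            fun h => Set.eq_empty_iff_forall_notMem.mp hd (t i) ⟨by simp, by simp [h]⟩⟩
  have hvne : ∀ (a b : Fin m), a ≠ b → (a - v0).val ≠ (b - v0).val :=
    fun a b hab h => hab (sub_left_inj.mp (Fin.ext h))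
  have hIff : ∀ i j : Fin k, i ≠ j →
      ((min (s i - v0).val (t i - v0).val < (s j - v0).val ∧
        (s j - v0).val < max (s i - v0).val (t i - v0).val) ↔
       (min (s i - v0).val (t i - v0).val < (t j - v0).val ∧
        (t j - v0).val < max (s i - v0).val (t i - v0).val)) := by
    intro i j hij
    by_cases hst : s i = t i
    · rw [hst]
      simp only [min_self, max_self]
      omega
    · have hx := hcf i j hij
      rw [chordsCross,
        cyclicBtw_pos v0 (s i) (s j) (t i) hst (hne i j hij).1.symm ((hne j i hij.symm).2.1),
        cyclicBtw_pos v0 (s i) (t j) (t i) hst (Ne.symm (hne i j hij).2.1) (Ne.symm (hne i j hij).2.2.2)] at hx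
      unfold Xor' Xor at hx
      by_cases hAB : (s i - v0).val < (t i - v0).val <;> tauto
  have hcnt : ∀ i, cntFun v0 s t i < n := fun i => lt_of_lt_of_le (cntFun_lt v0 s t i) hnk
  have Wspec : ∀ i : Fin k,
      ∃ w : ((cycleGraph m).boxProd (pathGraph n)).Walk (s i, ⟨0, hn0⟩) (t i, ⟨0, hn0⟩),
        w.IsPath ∧ ∀ x y, (x, y) ∈ w.support →
          ((x = s i ∨ x = t i) ∧ y.val ≤ cntFun v0 s t i) ∨
          (y.val = cntFun v0 s t i ∧
            min (s i - v0).val (t i - v0).val ≤ (x - v0).val ∧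
            (x - v0).val ≤ max (s i - v0).val (t i - v0).val) := by
    intro i
    by_cases hst : s i = t i
    · refine ⟨Walk.nil.copy rfl (by rw [hst]), ?_, ?_⟩
      · rw [Walk.isPath_copy]
        exact Walk.IsPath.nil
      · intro x y hxy
        rw [Walk.support_copy, Walk.support_nil] at hxy
        simp only [List.mem_singleton, Prod.mk.injEq] at hxy
        exact Or.inl ⟨Or.inl hxy.1, by simp [hxy.2]⟩
    · have hvne' : (s i - v0).val ≠ (t i - v0).val := hvne _ _ hst
      rcases hvne'.lt_or_gt with hlt | hgt
      · obtain ⟨w, hw1, hw2⟩ := buildPath m n hm hn0 v0 (s i) (t i) (cntFun v0 s t i) (hcnt i) hlt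
        refine ⟨w, hw1, ?_⟩
        intro x y hxy
        rcases hw2 x y hxy with h | h
        · exact Or.inl h
        · right
          refine ⟨h.1, by omega, by omega⟩
      · obtain ⟨w, hw1, hw2⟩ := buildPath m n hm hn0 v0 (t i) (s i) (cntFun v0 s t i) (hcnt i) hgt
        refine ⟨w.reverse, (Walk.isPath_reverse_iff w).mpr hw1, ?_⟩
        intro x y hxy
        rw [Walk.support_reverse, List.mem_reverse] at hxy
        rcases hw2 x y hxy with h | h
        · exact Or.inl ⟨h.1.elim Or.inr Or.inl, h.2⟩
        · right
          refine ⟨h.1, by omega, by omega⟩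
  choose w hw using Wspec
  refine ⟨w, fun i => (hw i).1, ?_⟩
  intro i j hij
  intro v hv1 hv2
  obtain ⟨x, y⟩ := v
  have m1 := (hw i).2 x y hv1
  have m2 := (hw j).2 x y hv2
  have m1' : (((x - v0).val = (s i - v0).val ∨ (x - v0).val = (t i - v0).val) ∧
        y.val ≤ cntFun v0 s t i) ∨
      (y.val = cntFun v0 s t i ∧
        min (s i - v0).val (t i - v0).val ≤ (x - v0).val ∧
        (x - v0).val ≤ max (s i - v0).val (t i - v0).val) :=
    m1.imp (fun h => ⟨h.1.imp (fun e => by rw [e]) (fun e => by rw [e]), h.2⟩) id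
  have m2' : (((x - v0).val = (s j - v0).val ∨ (x - v0).val = (t j - v0).val) ∧
        y.val ≤ cntFun v0 s t j) ∨
      (y.val = cntFun v0 s t j ∧
        min (s j - v0).val (t j - v0).val ≤ (x - v0).val ∧
        (x - v0).val ≤ max (s j - v0).val (t j - v0).val) :=
    m2.imp (fun h => ⟨h.1.imp (fun e => by rw [e]) (fun e => by rw [e]), h.2⟩) id
  have d1 := hvne _ _ (hne i j hij).1
  have d2 := hvne _ _ (hne i j hij).2.1
  have d3 := hvne _ _ (hne i j hij).2.2.1
  have d4 := hvne _ _ (hne i j hij).2.2.2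
  have i1 := hIff i j hij
  have i2 := hIff j i hij.symm
  have b1 : cntFun v0 s t j < cntFun v0 s t i ∨
      ¬(min (s i - v0).val (t i - v0).val < min (s j - v0).val (t j - v0).val ∧
        max (s j - v0).val (t j - v0).val < max (s i - v0).val (t i - v0).val) := by
    by_cases h : (min (s i - v0).val (t i - v0).val < min (s j - v0).val (t j - v0).val ∧
        max (s j - v0).val (t j - v0).val < max (s i - v0).val (t i - v0).val)
    · exact Or.inl (cntFun_mono v0 s t i j h.1 h.2)
    · exact Or.inr h
  have b2 : cntFun v0 s t i < cntFun v0 s t j ∨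
      ¬(min (s j - v0).val (t j - v0).val < min (s i - v0).val (t i - v0).val ∧
        max (s i - v0).val (t i - v0).val < max (s j - v0).val (t j - v0).val) := by
    by_cases h : (min (s j - v0).val (t j - v0).val < min (s i - v0).val (t i - v0).val ∧
        max (s i - v0).val (t i - v0).val < max (s j - v0).val (t j - v0).val)
    · exact Or.inl (cntFun_mono v0 s t j i h.1 h.2)
    · exact Or.inr h
  omega
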